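/- Variation-distance reformulation (Theorem 2, inner problem). Let L be a positive natural number, ψ : Fin L → ℝ, p̂ : Fin L → ℝ with p̂ l ≥ 0 for all l and ∑ l, p̂ l = 1, and ρ ≥ 0 real. Then sSup { ∑ l, p l * ψ l | p : Fin L → ℝ, (∀ l, 0 ≤ p l), ∑ l, p l = 1, ∑ l, |p l - p̂ l| ≤ ρ } = sInf { η + ρ * λ + ∑ l, p̂ l * r l | η : ℝ, λ : ℝ, r : Fin L → ℝ, 0 ≤ λ, ∀ l, (ψ l - η ≤ r l ∧ -λ ≤ r l ∧ ψ l - η ≤ λ) }. Both sets of real numbers are nonempty, the first is bounded above and the second is bounded below, and the two conditional supremum/infimum values coincide. -/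
import Mathlib


open scoped BigOperators

/-- Variation-distance reformulation (Theorem 2, inner problem). -/
theorem variation_distance_inner_duality
    (L : ℕ) (hL : 0 < L) (ψ pHat : Fin L → ℝ)
    (hpHat0 : ∀ l, 0 ≤ pHat l) (hpHatSum : ∑ l, pHat l = 1)
    (ρ : ℝ) (hρ : 0 ≤ ρ) :
    let S1 : Set ℝ := { x | ∃ p : Fin L → ℝ, (∀ l, 0 ≤ p l) ∧ (∑ l, p l = 1) ∧
        (∑ l, |p l - pHat l| ≤ ρ) ∧ x = ∑ l, p l * ψ l }
    let S2 : Set ℝ := { x | ∃ η lam : ℝ, ∃ r : Fin L → ℝ, 0 ≤ lam ∧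
        (∀ l, ψ l - η ≤ r l ∧ -lam ≤ r l ∧ ψ l - η ≤ lam) ∧
        x = η + ρ * lam + ∑ l, pHat l * r l }
    S1.Nonempty ∧ BddAbove S1 ∧ S2.Nonempty ∧ BddBelow S2 ∧ sSup S1 = sInf S2 := by
  intro S1 S2
  haveI : Nonempty (Fin L) := ⟨⟨0, hL⟩⟩
  -- weak duality
  have weak : ∀ x ∈ S1, ∀ y ∈ S2, x ≤ y := by
    rintro x ⟨p, hp0, hp1, hpρ, rfl⟩ y ⟨η, lam, r, hlam, hfeas, rfl⟩
    have key : ∀ l, p l * ψ l ≤ p l * η + pHat l * r l + lam * |p l - pHat l| := by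
      intro l
      obtain ⟨h1, h2, h3⟩ := hfeas l
      rcases le_or_gt (pHat l) (p l) with h | h
      · rw [abs_of_nonneg (by linarith)]
        have k1 : 0 ≤ (p l - pHat l) * (lam - (ψ l - η)) :=
          mul_nonneg (by linarith) (by linarith)
        have k2 : 0 ≤ pHat l * (r l - (ψ l - η)) :=
          mul_nonneg (hpHat0 l) (by linarith)
        nlinarith
      · rw [abs_of_neg (by linarith)]
        have k1 : 0 ≤ p l * (r l - (ψ l - η)) :=
          mul_nonneg (hp0 l) (by linarith)
        have k2 : 0 ≤ (pHat l - p l) * (r l + lam) :=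
          mul_nonneg (by linarith) (by linarith)
        nlinarith
    calc ∑ l, p l * ψ l
        ≤ ∑ l, (p l * η + pHat l * r l + lam * |p l - pHat l|) :=
          Finset.sum_le_sum fun l _ => key l
      _ = (∑ l, p l) * η + (∑ l, pHat l * r l) + lam * ∑ l, |p l - pHat l| := by
          rw [Finset.sum_add_distrib, Finset.sum_add_distrib, ← Finset.sum_mul,
            ← Finset.mul_sum]
      _ ≤ η + ρ * lam + ∑ l, pHat l * r l := by
          rw [hp1, one_mul]
          have : lam * ∑ l, |p l - pHat l| ≤ lam * ρ := mul_le_mul_of_nonneg_left hpρ hlam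
          linarith
  -- primal feasible point
  have hx1 : (∑ l, pHat l * ψ l) ∈ S1 := ⟨pHat, hpHat0, hpHatSum, by simp [hρ], rfl⟩
  -- max index
  obtain ⟨m, -, hm⟩ := Finset.exists_max_image Finset.univ ψ Finset.univ_nonempty
  have hm' : ∀ l, ψ l ≤ ψ m := fun l => hm l (Finset.mem_univ l)
  -- dual feasible point
  have hy2 : (ψ m) ∈ S2 := by
    refine ⟨ψ m, 0, fun _ => 0, le_refl 0, fun l => ⟨?_, ?_, ?_⟩, by simp⟩
    · show ψ l - ψ m ≤ 0
      linarith [hm' l]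
    · show -(0:ℝ) ≤ 0
      norm_num
    · show ψ l - ψ m ≤ 0
      linarith [hm' l]
  have hne1 : S1.Nonempty := ⟨_, hx1⟩
  have hne2 : S2.Nonempty := ⟨_, hy2⟩
  have hbdd1 : BddAbove S1 := ⟨ψ m, fun x hx => weak x hx _ hy2⟩
  have hbdd2 : BddBelow S2 := ⟨_, fun y hy => weak _ hx1 y hy⟩
  -- strong duality: a common point
  have strong : ∃ x, x ∈ S1 ∧ x ∈ S2 := by
    set F : ℝ := ∑ l, (if ψ l = ψ m then 0 else pHat l) with hF
    have hF0 : 0 ≤ F := Finset.sum_nonneg fun l _ => by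
      split
      · exact le_rfl
      · exact hpHat0 l
    have hF1 : F ≤ 1 := by
      rw [hF, ← hpHatSum]
      refine Finset.sum_le_sum fun l _ => ?_
      split
      · exact hpHat0 l
      · exact le_rfl
    by_cases hcase : F ≤ ρ / 2
    · -- easy case: all sub-max mass can be moved to the max
      refine ⟨ψ m, ⟨fun l => (if ψ l = ψ m then pHat l else 0) + (if l = m then F else 0),
        ?_, ?_, ?_, ?_⟩, hy2⟩
      · intro l
        have h1 : (0:ℝ) ≤ (if ψ l = ψ m then pHat l else 0) := by
          split
          · exact hpHat0 l
          · exact le_rfl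
        have h2 : (0:ℝ) ≤ (if l = m then F else 0) := by
          split
          · exact hF0
          · exact le_rfl
        dsimp only
        linarith
      · dsimp only
        have e1 : ∑ l, ((if ψ l = ψ m then pHat l else 0) + (if ψ l = ψ m then 0 else pHat l))
            = 1 := by
          rw [← hpHatSum]
          exact Finset.sum_congr rfl fun l _ => by split <;> ring
        rw [Finset.sum_add_distrib] at e1 ⊢
        rw [Finset.sum_ite_eq' Finset.univ m (fun _ => F)]
        simp only [Finset.mem_univ, if_true]
        linarith [hF]
      · dsimp only
        have habs : ∀ l,
            |((if ψ l = ψ m then pHat l else 0) + (if l = m then F else 0)) - pHat l|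
            = (if l = m then F else 0) + (if ψ l = ψ m then 0 else pHat l) := by
          intro l
          by_cases h1 : l = m
          · rw [h1]
            simp only [eq_self_iff_true, if_true, ite_true]
            rw [abs_of_nonneg (by linarith [hpHat0 m])]
            ring
          · by_cases h2 : ψ l = ψ m
            · simp only [if_pos h2, if_neg h1]
              simp
            · simp only [if_neg h2, if_neg h1]
              rw [abs_of_nonpos (by simpa using hpHat0 l)]
              ring
        rw [Finset.sum_congr rfl fun l _ => habs l, Finset.sum_add_distrib,
          Finset.sum_ite_eq' Finset.univ m (fun _ => F)]
        simp only [Finset.mem_univ, if_true]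
        linarith [hF]
      · dsimp only
        have hval : ∀ l, ((if ψ l = ψ m then pHat l else 0) + (if l = m then F else 0)) * ψ l
            = (if ψ l = ψ m then pHat l else 0) * ψ m + (if l = m then F else 0) * ψ m := by
          intro l
          by_cases h2 : ψ l = ψ m
          · rw [h2]
            ring
          · have h1 : l ≠ m := fun e => h2 (by rw [e])
            simp only [if_neg h2, if_neg h1]
            ring
        rw [Finset.sum_congr rfl fun l _ => hval l, Finset.sum_add_distrib,
          ← Finset.sum_mul, ← Finset.sum_mul,
          Finset.sum_ite_eq' Finset.univ m (fun _ => F)]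
        simp only [Finset.mem_univ, if_true]
        have e1 : ∑ l, ((if ψ l = ψ m then pHat l else 0) + (if ψ l = ψ m then 0 else pHat l))
            = 1 := by
          rw [← hpHatSum]
          exact Finset.sum_congr rfl fun l _ => by split <;> ring
        rw [Finset.sum_add_distrib] at e1
        have e2 : (∑ l, if ψ l = ψ m then pHat l else 0) = 1 - F := by linarith [hF]
        rw [e2]
        ring
    · -- hard case: quantile construction
      push_neg at hcase
      set s : ℝ := ρ / 2 with hsdef
      have hs0 : 0 ≤ s := by rw [hsdef]; linarith
      have hsF : s < F := hcase
      -- cumulative distribution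
      set G : ℝ → ℝ := fun b => ∑ l, (if ψ l ≤ b then pHat l else 0) with hG
      have hGm : G (ψ m) = 1 := by
        rw [hG, ← hpHatSum]
        exact Finset.sum_congr rfl fun l _ => by rw [if_pos (hm' l)]
      set T : Finset (Fin L) := Finset.univ.filter (fun l => s ≤ G (ψ l)) with hT
      have hmT : m ∈ T := by
        rw [hT, Finset.mem_filter]
        refine ⟨Finset.mem_univ m, ?_⟩
        rw [hGm]
        linarith
      obtain ⟨l0, hl0T, hl0min⟩ := Finset.exists_min_image T ψ ⟨m, hmT⟩
      have hsGβ : s ≤ G (ψ l0) := (Finset.mem_filter.mp hl0T).2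
      -- β < ψ m
      have hβM : ψ l0 < ψ m := by
        have hne : (Finset.univ.filter (fun l => ψ l ≠ ψ m)).Nonempty := by
          by_contra h
          rw [Finset.not_nonempty_iff_eq_empty] at h
          have hF0' : F = 0 := by
            rw [hF]
            apply Finset.sum_eq_zero
            intro l _
            have hl : ψ l = ψ m := by
              by_contra hc
              have : l ∈ Finset.univ.filter (fun l => ψ l ≠ ψ m) :=
                Finset.mem_filter.mpr ⟨Finset.mem_univ l, hc⟩
              rw [h] at this
              exact absurd this (Finset.notMem_empty l)
            rw [if_pos hl]
          linarith
        obtain ⟨l2, hl2mem, hl2max⟩ := Finset.exists_max_image _ ψ hne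
        have hl2 : ψ l2 ≠ ψ m := (Finset.mem_filter.mp hl2mem).2
        have hFG : F ≤ G (ψ l2) := by
          rw [hF, hG]
          refine Finset.sum_le_sum fun l _ => ?_
          by_cases h : ψ l = ψ m
          · rw [if_pos h]
            split
            · exact hpHat0 l
            · exact le_rfl
          · rw [if_neg h,
              if_pos (hl2max l (Finset.mem_filter.mpr ⟨Finset.mem_univ l, h⟩))]
        have hl2T : l2 ∈ T := Finset.mem_filter.mpr ⟨Finset.mem_univ l2, by linarith⟩
        have h1 : ψ l2 < ψ m := lt_of_le_of_ne (hm' l2) hl2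
        have h2 := hl0min l2 hl2T
        linarith
      -- F_β ≤ s
      set Fβ : ℝ := ∑ l, (if ψ l < ψ l0 then pHat l else 0) with hFβdef
      have hFβs : Fβ ≤ s := by
        by_cases hA : (Finset.univ.filter (fun l => ψ l < ψ l0)).Nonempty
        · obtain ⟨l1, hl1mem, hl1max⟩ := Finset.exists_max_image _ ψ hA
          have hl1 : ψ l1 < ψ l0 := (Finset.mem_filter.mp hl1mem).2
          have hFG : Fβ ≤ G (ψ l1) := by
            rw [hFβdef, hG]
            refine Finset.sum_le_sum fun l _ => ?_
            by_cases h : ψ l < ψ l0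
            · rw [if_pos h,
                if_pos (hl1max l (Finset.mem_filter.mpr ⟨Finset.mem_univ l, h⟩))]
            · rw [if_neg h]
              split
              · exact hpHat0 l
              · exact le_rfl
          have hlt : G (ψ l1) < s := by
            by_contra h
            push_neg at h
            have hl1T : l1 ∈ T := Finset.mem_filter.mpr ⟨Finset.mem_univ l1, h⟩
            have := hl0min l1 hl1T
            linarith
          linarith
        · have h0 : Fβ = 0 := by
            rw [hFβdef]
            apply Finset.sum_eq_zero
            intro l _
            rw [if_neg]
            intro h
            exact hA ⟨l, Finset.mem_filter.mpr ⟨Finset.mem_univ l, h⟩⟩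
          linarith
      set Gβ : ℝ := G (ψ l0) with hGβdef
      have hFβGβ : Fβ ≤ Gβ := by
        rw [hFβdef, hGβdef, hG]
        refine Finset.sum_le_sum fun l _ => ?_
        by_cases h : ψ l < ψ l0
        · rw [if_pos h, if_pos (le_of_lt h)]
        · rw [if_neg h]
          split
          · exact hpHat0 l
          · exact le_rfl
      have hsGβ' : s ≤ Gβ := hsGβ
      -- split of mass identities
      set Seq : ℝ := ∑ l, (if ψ l = ψ l0 then pHat l else 0) with hSeq
      set Sgt : ℝ := ∑ l, (if ψ l0 < ψ l then pHat l else 0) with hSgt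
      set Sgtp : ℝ := ∑ l, (if ψ l0 < ψ l then pHat l * ψ l else 0) with hSgtp
      have hGsplit : Gβ = Fβ + Seq := by
        rw [hGβdef, hG, hFβdef, hSeq, ← Finset.sum_add_distrib]
        apply Finset.sum_congr rfl
        intro l _
        rcases lt_trichotomy (ψ l) (ψ l0) with h | h | h
        · rw [if_pos (le_of_lt h), if_pos h, if_neg (ne_of_lt h)]; ring
        · rw [if_pos (le_of_eq h), if_neg (by linarith), if_pos h]; ring
        · rw [if_neg (by linarith), if_neg (by linarith), if_neg (by linarith)]; ring
      have hTotal : Gβ + Sgt = 1 := by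
        rw [hGβdef, hG, hSgt, ← Finset.sum_add_distrib, ← hpHatSum]
        apply Finset.sum_congr rfl
        intro l _
        rcases le_or_gt (ψ l) (ψ l0) with h | h
        · rw [if_pos h, if_neg (not_lt.mpr h)]; ring
        · rw [if_neg (not_le.mpr h), if_pos h]; ring
      -- the scaling factor
      set c : ℝ := if Gβ - Fβ = 0 then 1 else (Gβ - s) / (Gβ - Fβ) with hc
      have hcD : c * (Gβ - Fβ) = Gβ - s := by
        rw [hc]
        by_cases h : Gβ - Fβ = 0
        · rw [if_pos h, h]
          have : s = Gβ := le_antisymm hsGβ' (by linarith)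
          linarith
        · rw [if_neg h, div_mul_cancel₀ _ h]
      have hc0 : 0 ≤ c := by
        rw [hc]
        by_cases h : Gβ - Fβ = 0
        · rw [if_pos h]; norm_num
        · rw [if_neg h]
          have hpos : 0 < Gβ - Fβ := lt_of_le_of_ne (by linarith) (Ne.symm h)
          exact div_nonneg (by linarith) (le_of_lt hpos)
      have hc1 : c ≤ 1 := by
        rw [hc]
        by_cases h : Gβ - Fβ = 0
        · rw [if_pos h]
        · rw [if_neg h]
          have hpos : 0 < Gβ - Fβ := lt_of_le_of_ne (by linarith) (Ne.symm h)
          rw [div_le_one hpos]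
          linarith
      have hce : c * Seq = Gβ - s := by
        have hq : Seq = Gβ - Fβ := by linarith [hGsplit]
        rw [hq]
        exact hcD
      have hmβlt : ¬ ψ m < ψ l0 := by linarith
      have hmβne : ψ m ≠ ψ l0 := ne_of_gt hβM
      -- the common value
      refine ⟨ψ l0 * (Gβ - s) + Sgtp + s * ψ m, ?_, ?_⟩
      · -- primal membership
        refine ⟨fun l =>
          (if ψ l < ψ l0 then 0 else if ψ l = ψ l0 then c * pHat l else pHat l)
          + (if l = m then s else 0), ?_, ?_, ?_, ?_⟩
        · intro l
          have h1 : (0:ℝ) ≤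
              (if ψ l < ψ l0 then 0 else if ψ l = ψ l0 then c * pHat l else pHat l) := by
            split
            · exact le_rfl
            · split
              · exact mul_nonneg hc0 (hpHat0 l)
              · exact hpHat0 l
          have h2 : (0:ℝ) ≤ (if l = m then s else 0) := by
            split
            · exact hs0
            · exact le_rfl
          dsimp only
          linarith
        · -- sums to one
          have hbase : ∀ l,
              (if ψ l < ψ l0 then (0:ℝ) else if ψ l = ψ l0 then c * pHat l else pHat l)
              = c * (if ψ l = ψ l0 then pHat l else 0) + (if ψ l0 < ψ l then pHat l else 0) := by
            intro l
            rcases lt_trichotomy (ψ l) (ψ l0) with h | h | h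
            · rw [if_pos h, if_neg (ne_of_lt h), if_neg (by linarith)]; ring
            · rw [if_neg (by linarith), if_pos h, if_pos h, if_neg (by linarith)]; ring
            · rw [if_neg (by linarith), if_neg (by linarith), if_neg (by linarith), if_pos h]
              ring
          dsimp only
          rw [Finset.sum_add_distrib, Finset.sum_congr rfl fun l _ => hbase l,
            Finset.sum_add_distrib, ← Finset.mul_sum,
            Finset.sum_ite_eq' Finset.univ m (fun _ => s)]
          simp only [Finset.mem_univ, if_true]
          rw [← hSeq, ← hSgt]
          linarith [hce, hTotal]
        · -- total variation constraint
          have habs : ∀ l,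
              |((if ψ l < ψ l0 then (0:ℝ) else if ψ l = ψ l0 then c * pHat l else pHat l)
                + (if l = m then s else 0)) - pHat l| =
              (1 - c) * (if ψ l = ψ l0 then pHat l else 0)
              + (if ψ l < ψ l0 then pHat l else 0) + (if l = m then s else 0) := by
            intro l
            by_cases h1 : l = m
            · rw [h1]
              simp only [if_neg hmβlt, if_neg hmβne, eq_self_iff_true, if_true, ite_true]
              rw [abs_of_nonneg (by linarith [hpHat0 m])]
              ring
            · simp only [if_neg h1]
              rcases lt_trichotomy (ψ l) (ψ l0) with h | h | h
              · rw [if_pos h, if_neg (ne_of_lt h), if_pos h]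
                rw [abs_of_nonpos (by simpa using hpHat0 l)]
                ring
              · rw [if_neg (by linarith), if_pos h, if_pos h, if_neg (by linarith)]
                have hnn : 0 ≤ (1 - c) * pHat l := mul_nonneg (by linarith) (hpHat0 l)
                rw [abs_of_nonpos (by nlinarith)]
                ring
              · rw [if_neg (by linarith), if_neg (by linarith), if_neg (by linarith),
                  if_neg (by linarith)]
                simp
          dsimp only
          rw [Finset.sum_congr rfl fun l _ => habs l, Finset.sum_add_distrib,
            Finset.sum_add_distrib, ← Finset.mul_sum,
            Finset.sum_ite_eq' Finset.univ m (fun _ => s)]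
          simp only [Finset.mem_univ, if_true]
          rw [← hSeq, ← hFβdef]
          have hexp : (1 - c) * Seq = Seq - c * Seq := by ring
          have hSeqval : Seq = Gβ - Fβ := by linarith [hGsplit]
          have hsρ : s = ρ / 2 := hsdef
          linarith [hce, hexp, hSeqval]
        · -- objective value
          have hval : ∀ l,
              ((if ψ l < ψ l0 then (0:ℝ) else if ψ l = ψ l0 then c * pHat l else pHat l)
                + (if l = m then s else 0)) * ψ l =
              (c * ψ l0) * (if ψ l = ψ l0 then pHat l else 0)
              + (if ψ l0 < ψ l then pHat l * ψ l else 0)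
              + (if l = m then s * ψ m else 0) := by
            intro l
            by_cases h1 : l = m
            · rw [h1]
              simp only [if_neg hmβlt, if_neg hmβne, if_pos hβM, eq_self_iff_true,
                if_true, ite_true]
              ring
            · simp only [if_neg h1]
              rcases lt_trichotomy (ψ l) (ψ l0) with h | h | h
              · rw [if_pos h, if_neg (ne_of_lt h), if_neg (by linarith)]; ring
              · rw [if_neg (by linarith), if_pos h, if_pos h, if_neg (by linarith)]
                rw [h]; ring
              · rw [if_neg (by linarith), if_neg (by linarith), if_neg (by linarith), if_pos h]
                ring
          dsimp only
          rw [Finset.sum_congr rfl fun l _ => hval l, Finset.sum_add_distrib,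
            Finset.sum_add_distrib, ← Finset.mul_sum,
            Finset.sum_ite_eq' Finset.univ m (fun _ => s * ψ m)]
          simp only [Finset.mem_univ, if_true]
          rw [← hSeq, ← hSgtp]
          have e : (c * ψ l0) * Seq = ψ l0 * (Gβ - s) := by rw [← hce]; ring
          linarith [e]
      · -- dual membership
        refine ⟨(ψ m + ψ l0) / 2, (ψ m - ψ l0) / 2,
          fun l => max (ψ l) (ψ l0) - (ψ m + ψ l0) / 2, by linarith, ?_, ?_⟩
        · intro l
          refine ⟨?_, ?_, ?_⟩
          · show ψ l - (ψ m + ψ l0) / 2 ≤ max (ψ l) (ψ l0) - (ψ m + ψ l0) / 2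
            linarith [le_max_left (ψ l) (ψ l0)]
          · show -((ψ m - ψ l0) / 2) ≤ max (ψ l) (ψ l0) - (ψ m + ψ l0) / 2
            linarith [le_max_right (ψ l) (ψ l0)]
          · show ψ l - (ψ m + ψ l0) / 2 ≤ (ψ m - ψ l0) / 2
            linarith [hm' l]
        · have hmax : ∀ l, pHat l * (max (ψ l) (ψ l0) - (ψ m + ψ l0) / 2)
              = ψ l0 * (if ψ l ≤ ψ l0 then pHat l else 0)
              + (if ψ l0 < ψ l then pHat l * ψ l else 0)
              - pHat l * ((ψ m + ψ l0) / 2) := by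
            intro l
            rcases le_or_gt (ψ l) (ψ l0) with h | h
            · rw [max_eq_right h, if_pos h, if_neg (not_lt.mpr h)]; ring
            · rw [max_eq_left (le_of_lt h), if_neg (not_le.mpr h), if_pos h]; ring
          rw [Finset.sum_congr rfl fun l _ => hmax l, Finset.sum_sub_distrib,
            Finset.sum_add_distrib, ← Finset.mul_sum, ← Finset.sum_mul, hpHatSum]
          have hGβs : (∑ l, if ψ l ≤ ψ l0 then pHat l else 0) = Gβ := by rw [hGβdef, hG]
          rw [hGβs, ← hSgtp, hsdef]
          ring
  obtain ⟨x, hxS1, hxS2⟩ := strong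
  refine ⟨hne1, hbdd1, hne2, hbdd2, le_antisymm ?_ ?_⟩
  · exact csSup_le hne1 fun x hx => le_csInf hne2 fun y hy => weak x hx y hy
  · exact le_trans (csInf_le hbdd2 hxS2) (le_csSup hbdd1 hxS1)
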